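/- Let H_1, …, H_C ∈ ℝ^{m×m} be symmetric positive semidefinite, δ ∈ ℝ^C, and v, d ∈ ℝ^m with e₁ = v^T d, e₂ = ‖v‖‖d‖. Then Σ_{j=1}^C δ_j v^T H_j d ≥ (1/2) Σ_{j=1}^C (δ_j e₁ − |δ_j| e₂) ‖H_j‖. -/

import Mathlib

open Matrix

noncomputable def vnorm {m : ℕ} (v : Fin m → ℝ) : ℝ := Real.sqrt (v ⬝ᵥ v)

noncomputable def opNorm {m : ℕ} (M : Matrix (Fin m) (Fin m) ℝ) : ℝ :=
  ‖Matrix.toEuclideanCLM (𝕜 := ℝ) M‖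

lemma quad_le {m : ℕ} (H : Matrix (Fin m) (Fin m) ℝ) (x : Fin m → ℝ) :
    x ⬝ᵥ H.mulVec x ≤ opNorm H * (x ⬝ᵥ x) := by
  set y : EuclideanSpace ℝ (Fin m) := (WithLp.equiv 2 (Fin m → ℝ)).symm x with hy
  have h1 : x ⬝ᵥ H.mulVec x = inner ℝ y (Matrix.toEuclideanCLM (𝕜 := ℝ) H y) := by
    rw [hy, WithLp.equiv_symm_apply, Matrix.toEuclideanCLM_toLp]
    simp [PiLp.inner_apply, dotProduct, mul_comm]
  have h2 : (inner ℝ y y : ℝ) = x ⬝ᵥ x := by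
    rw [hy, WithLp.equiv_symm_apply, PiLp.inner_apply]
    simp [dotProduct, mul_comm, sq]
  calc x ⬝ᵥ H.mulVec x = inner ℝ y (Matrix.toEuclideanCLM (𝕜 := ℝ) H y) := h1
    _ ≤ ‖y‖ * ‖Matrix.toEuclideanCLM (𝕜 := ℝ) H y‖ := real_inner_le_norm _ _
    _ ≤ ‖y‖ * (opNorm H * ‖y‖) := by
        apply mul_le_mul_of_nonneg_left ((Matrix.toEuclideanCLM (𝕜 := ℝ) H).le_opNorm y) (norm_nonneg _)
    _ = opNorm H * (inner ℝ y y : ℝ) := by rw [real_inner_self_eq_norm_mul_norm]; ring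
    _ = opNorm H * (x ⬝ᵥ x) := by rw [h2]

lemma hsymm {m : ℕ} {H : Matrix (Fin m) (Fin m) ℝ} (hH : H.PosSemidef)
    (x y : Fin m → ℝ) : x ⬝ᵥ H.mulVec y = y ⬝ᵥ H.mulVec x := by
  have ht : Hᵀ = H := by
    have := hH.1
    rwa [Matrix.IsHermitian, Matrix.conjTranspose_eq_transpose_of_trivial] at this
  rw [Matrix.dotProduct_mulVec, ← Matrix.mulVec_transpose, ht, dotProduct_comm]

lemma expand_dot {m : ℕ} (v d : Fin m → ℝ) (s t : ℝ) :
    (s • v + t • d) ⬝ᵥ (s • v + t • d)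
      = s^2*(v ⬝ᵥ v) + 2*s*t*(v ⬝ᵥ d) + t^2*(d ⬝ᵥ d) := by
  simp [add_dotProduct, dotProduct_add, smul_dotProduct, dotProduct_smul, smul_eq_mul,
    dotProduct_comm d v]
  ring

lemma expand_Q {m : ℕ} {H : Matrix (Fin m) (Fin m) ℝ} (hH : H.PosSemidef)
    (v d : Fin m → ℝ) (s t : ℝ) :
    (s • v + t • d) ⬝ᵥ H.mulVec (s • v + t • d)
      = s^2*(v ⬝ᵥ H.mulVec v) + 2*s*t*(v ⬝ᵥ H.mulVec d) + t^2*(d ⬝ᵥ H.mulVec d) := by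
  simp [Matrix.mulVec_add, Matrix.mulVec_smul, add_dotProduct, dotProduct_add,
    smul_dotProduct, dotProduct_smul, smul_eq_mul, hsymm hH d v]
  ring

lemma Q_nonneg {m : ℕ} {H : Matrix (Fin m) (Fin m) ℝ} (hH : H.PosSemidef)
    (x : Fin m → ℝ) : 0 ≤ x ⬝ᵥ H.mulVec x := by
  simpa using hH.re_dotProduct_nonneg x

lemma term_bounds {m : ℕ} {H : Matrix (Fin m) (Fin m) ℝ} (hH : H.PosSemidef)
    (v d : Fin m → ℝ) :
    (1/2) * (v ⬝ᵥ d - vnorm v * vnorm d) * opNorm H ≤ v ⬝ᵥ H.mulVec d ∧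
      v ⬝ᵥ H.mulVec d ≤ (1/2) * (v ⬝ᵥ d + vnorm v * vnorm d) * opNorm H := by
  set a := vnorm v with ha
  set b := vnorm d with hb
  set h := opNorm H with hh
  set X := v ⬝ᵥ H.mulVec d with hX
  set e := v ⬝ᵥ d with he
  have hvv : 0 ≤ v ⬝ᵥ v := by
    simpa [dotProduct] using Finset.sum_nonneg fun i _ => mul_self_nonneg (v i)
  have hdd : 0 ≤ d ⬝ᵥ d := by
    simpa [dotProduct] using Finset.sum_nonneg fun i _ => mul_self_nonneg (d i)
  have ha2 : a^2 = v ⬝ᵥ v := Real.sq_sqrt hvv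
  have hb2 : b^2 = d ⬝ᵥ d := Real.sq_sqrt hdd
  have ha0 : 0 ≤ a := Real.sqrt_nonneg _
  have hb0 : 0 ≤ b := Real.sqrt_nonneg _
  have hh0 : 0 ≤ h := norm_nonneg _
  rcases eq_or_lt_of_le (mul_nonneg ha0 hb0) with hab | hab
  · -- a*b = 0 : v = 0 or d = 0
    have : v = 0 ∨ d = 0 := by
      rcases mul_eq_zero.mp hab.symm with h0 | h0
      · left
        have : v ⬝ᵥ v = 0 := by rw [← ha2, h0]; ring
        exact (dotProduct_self_eq_zero).mp this
      · right
        have : d ⬝ᵥ d = 0 := by rw [← hb2, h0]; ring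
        exact (dotProduct_self_eq_zero).mp this
    have hX0 : X = 0 := by
      rcases this with h0 | h0 <;> simp [hX, h0]
    have he0 : e = 0 := by
      rcases this with h0 | h0 <;> simp [he, h0]
    rw [hX0, he0, ← hab]
    constructor <;> nlinarith
  · have Qp := Q_nonneg hH (b • v + a • d)
    have Qm := Q_nonneg hH (b • v + (-a) • d)
    have Ep := expand_Q hH v d b a
    have Em := expand_Q hH v d b (-a)
    have Cp := quad_le H (b • v + a • d)
    have Cm := quad_le H (b • v + (-a) • d)
    rw [Ep, expand_dot] at Cp
    rw [Em, expand_dot] at Cm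
    rw [Ep] at Qp
    rw [Em] at Qm
    rw [← ha2, ← hb2] at Cp Cm
    constructor <;> nlinarith [mul_pos hab hab, sq_nonneg (a*b)]

theorem stmt_15 (m C : ℕ) (H : Fin C → Matrix (Fin m) (Fin m) ℝ)
    (hH : ∀ j, (H j).PosSemidef) (δ : Fin C → ℝ) (v d : Fin m → ℝ) :
    (1 / 2) * ∑ j, (δ j * (v ⬝ᵥ d) - |δ j| * (vnorm v * vnorm d)) * opNorm (H j) ≤
      ∑ j, δ j * (v ⬝ᵥ (H j).mulVec d) := by
  rw [Finset.mul_sum]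
  apply Finset.sum_le_sum
  intro j _
  obtain ⟨hlow, hup⟩ := term_bounds (hH j) v d
  have hh0 : 0 ≤ opNorm (H j) := norm_nonneg _
  rcases le_or_gt 0 (δ j) with hδ | hδ
  · rw [abs_of_nonneg hδ]
    nlinarith [mul_le_mul_of_nonneg_left hlow hδ]
  · rw [abs_of_neg hδ]
    nlinarith [mul_le_mul_of_nonpos_left hup hδ.le]
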